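/- Let k ∈ ℕ and let a₀, …, a_{k−1}, d₀, d₁, ν₀, ν₁ all be rational at infinity. Then there exist functions b₀, …, b_k, each rational at infinity, with b_k = d₀(d₀−1)⋯(d₀−k+1), such that the following holds: for every domain U contained in an annulus Ω(r) on which a₀, …, a_{k−1}, d₀, d₁, ν₀, ν₁ and b₀, …, b_k are all analytic, and every pair of zero-free analytic functions p, q on U satisfying p′/p = d₀·(q′/q) + d₁ and q″ + ν₁q′ + ν₀q = 0 on U, one has L[p]/p = Σ_{j=0}^{k} b_j·(q′/q)^j on U, where L[p] = p^{(k)} + a_{k−1}p^{(k−1)} + ⋯ + a₀p. -/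

import Mathlib

/-- A function is rational at infinity if it is analytic on some annulus
`Ω(r) = {z : r < |z|}` and has at most polynomial growth there
(equivalently, at most a pole at `∞`). -/
def RationalAtInfinity (a : ℂ → ℂ) : Prop :=
  ∃ r : ℝ, 0 < r ∧ AnalyticOnNhd ℂ a {z : ℂ | r < ‖z‖} ∧
    ∃ (n : ℕ) (C : ℝ), ∀ z : ℂ, r < ‖z‖ →
      ‖a z‖ ≤ C * ‖z‖ ^ n

namespace LinOpAux

/-- The coefficient functions `c m j` with `p^{(m)}/p = ∑_j c_{m,j} (q'/q)^j`. -/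
noncomputable def cf (d₀ d₁ ν₀ ν₁ : ℂ → ℂ) : ℕ → ℕ → ℂ → ℂ
  | 0, 0 => fun _ => 1
  | 0, _ + 1 => fun _ => 0
  | m + 1, j => fun z =>
      deriv (cf d₀ d₁ ν₀ ν₁ m j) z + d₁ z * cf d₀ d₁ ν₀ ν₁ m j z
        + (match j with
           | 0 => 0
           | i + 1 => (d₀ z - (i : ℂ)) * cf d₀ d₁ ν₀ ν₁ m i z)
        - (j : ℂ) * ν₁ z * cf d₀ d₁ ν₀ ν₁ m j z
        - ((j : ℂ) + 1) * ν₀ z * cf d₀ d₁ ν₀ ν₁ m (j + 1) z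

variable {d₀ d₁ ν₀ ν₁ : ℂ → ℂ}

lemma cf_zero_of_lt : ∀ (m j : ℕ), m < j → cf d₀ d₁ ν₀ ν₁ m j = fun _ => 0 := by
  intro m
  induction m with
  | zero =>
    intro j hj
    match j, hj with
    | j + 1, _ => rfl
  | succ m ih =>
    intro j hj
    funext z
    match j, hj with
    | j + 1, hj =>
      have h1 : cf d₀ d₁ ν₀ ν₁ m (j + 1) = fun _ => 0 :=
        ih _ (lt_of_le_of_lt (Nat.le_succ m) hj)
      have h2 : cf d₀ d₁ ν₀ ν₁ m (j + 2) = fun _ => 0 :=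
        ih _ (lt_of_le_of_lt (Nat.le_succ m) (lt_trans hj (Nat.lt_succ_self _)))
      have h3 : cf d₀ d₁ ν₀ ν₁ m j = fun _ => 0 := ih _ (by omega)
      simp [cf, h1, h2, h3]

lemma cf_diag : ∀ (m : ℕ) (z : ℂ),
    cf d₀ d₁ ν₀ ν₁ m m z = ∏ j ∈ Finset.range m, (d₀ z - (j : ℂ)) := by
  intro m
  induction m with
  | zero => intro z; simp [cf]
  | succ m ih =>
    intro z
    have h1 : cf d₀ d₁ ν₀ ν₁ m (m + 1) = fun _ => 0 := cf_zero_of_lt m (m + 1) (Nat.lt_succ_self m)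
    have h2 : cf d₀ d₁ ν₀ ν₁ m (m + 2) = fun _ => 0 := cf_zero_of_lt m (m + 2) (by omega)
    simp only [cf, h1, h2, deriv_const', mul_zero, add_zero, zero_add, sub_zero]
    rw [ih, Finset.prod_range_succ, mul_comm]

/-! ### Closure properties of `RationalAtInfinity` -/

lemma rai_const (c : ℂ) : RationalAtInfinity (fun _ => c) := by
  refine ⟨1, one_pos, fun z _ => analyticAt_const, 0, ‖c‖, fun z _ => by simp⟩

lemma rai_mono {f : ℂ → ℂ} {r r' : ℝ} (h : r ≤ r')
    (hf : AnalyticOnNhd ℂ f {z : ℂ | r < ‖z‖}) :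
    AnalyticOnNhd ℂ f {z : ℂ | r' < ‖z‖} :=
  fun z hz => hf z (lt_of_le_of_lt h hz)

lemma rai_add {f g : ℂ → ℂ} (hf : RationalAtInfinity f) (hg : RationalAtInfinity g) :
    RationalAtInfinity (fun z => f z + g z) := by
  obtain ⟨r₁, hr₁, han₁, n₁, C₁, hb₁⟩ := hf
  obtain ⟨r₂, hr₂, han₂, n₂, C₂, hb₂⟩ := hg
  refine ⟨max (max r₁ r₂) 1, by positivity, ?_, max n₁ n₂, max C₁ 0 + max C₂ 0, ?_⟩
  · intro z hz
    simp only [Set.mem_setOf_eq, max_lt_iff] at hz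
    exact (han₁ z hz.1.1).add (han₂ z hz.1.2)
  · intro z hz
    simp only [Set.mem_setOf_eq, max_lt_iff] at hz
    obtain ⟨⟨hz₁, hz₂⟩, h1'⟩ := hz
    have h1 : (1 : ℝ) ≤ ‖z‖ := le_of_lt h1'
    have p1 : ‖z‖ ^ n₁ ≤ ‖z‖ ^ max n₁ n₂ :=
      pow_le_pow_right₀ h1 (le_max_left _ _)
    have p2 : ‖z‖ ^ n₂ ≤ ‖z‖ ^ max n₁ n₂ :=
      pow_le_pow_right₀ h1 (le_max_right _ _)
    have e1 : ‖f z‖ ≤ max C₁ 0 * ‖z‖ ^ max n₁ n₂ := by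
      calc ‖f z‖ ≤ C₁ * ‖z‖ ^ n₁ := hb₁ z hz₁
        _ ≤ max C₁ 0 * ‖z‖ ^ n₁ := by
            apply mul_le_mul_of_nonneg_right (le_max_left _ _) (by positivity)
        _ ≤ max C₁ 0 * ‖z‖ ^ max n₁ n₂ := by
            apply mul_le_mul_of_nonneg_left p1 (le_max_right _ _)
    have e2 : ‖g z‖ ≤ max C₂ 0 * ‖z‖ ^ max n₁ n₂ := by
      calc ‖g z‖ ≤ C₂ * ‖z‖ ^ n₂ := hb₂ z hz₂
        _ ≤ max C₂ 0 * ‖z‖ ^ n₂ := by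
            apply mul_le_mul_of_nonneg_right (le_max_left _ _) (by positivity)
        _ ≤ max C₂ 0 * ‖z‖ ^ max n₁ n₂ := by
            apply mul_le_mul_of_nonneg_left p2 (le_max_right _ _)
    calc ‖f z + g z‖ ≤ ‖f z‖ + ‖g z‖ :=
          norm_add_le _ _
      _ ≤ (max C₁ 0 + max C₂ 0) * ‖z‖ ^ max n₁ n₂ := by rw [add_mul]; exact add_le_add e1 e2

lemma rai_mul {f g : ℂ → ℂ} (hf : RationalAtInfinity f) (hg : RationalAtInfinity g) :
    RationalAtInfinity (fun z => f z * g z) := by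
  obtain ⟨r₁, hr₁, han₁, n₁, C₁, hb₁⟩ := hf
  obtain ⟨r₂, hr₂, han₂, n₂, C₂, hb₂⟩ := hg
  refine ⟨max r₁ r₂, lt_max_of_lt_left hr₁, ?_, n₁ + n₂, max C₁ 0 * max C₂ 0, ?_⟩
  · intro z hz
    simp only [Set.mem_setOf_eq, max_lt_iff] at hz
    exact (han₁ z hz.1).mul (han₂ z hz.2)
  · intro z hz
    simp only [Set.mem_setOf_eq, max_lt_iff] at hz
    rw [norm_mul, pow_add]
    have e1 : ‖f z‖ ≤ max C₁ 0 * ‖z‖ ^ n₁ :=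
      le_trans (hb₁ z hz.1) (mul_le_mul_of_nonneg_right (le_max_left _ _) (by positivity))
    have e2 : ‖g z‖ ≤ max C₂ 0 * ‖z‖ ^ n₂ :=
      le_trans (hb₂ z hz.2) (mul_le_mul_of_nonneg_right (le_max_left _ _) (by positivity))
    calc ‖f z‖ * ‖g z‖
        ≤ (max C₁ 0 * ‖z‖ ^ n₁) * (max C₂ 0 * ‖z‖ ^ n₂) := by
          apply mul_le_mul e1 e2 (norm_nonneg _) (by positivity)
      _ = max C₁ 0 * max C₂ 0 * (‖z‖ ^ n₁ * ‖z‖ ^ n₂) := by ring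

lemma rai_neg {f : ℂ → ℂ} (hf : RationalAtInfinity f) : RationalAtInfinity (fun z => -f z) := by
  simpa using rai_mul (rai_const (-1)) hf

lemma rai_sub {f g : ℂ → ℂ} (hf : RationalAtInfinity f) (hg : RationalAtInfinity g) :
    RationalAtInfinity (fun z => f z - g z) := by
  simpa [sub_eq_add_neg] using rai_add hf (rai_neg hg)

lemma rai_deriv {f : ℂ → ℂ} (hf : RationalAtInfinity f) : RationalAtInfinity (deriv f) := by
  obtain ⟨r, hr, han, n, C, hb⟩ := hf
  refine ⟨max (2 * r) 1, by positivity, ?_, n, 2 * max C 0 * (3 / 2) ^ n, ?_⟩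
  · apply rai_mono _ han.deriv
    have : r ≤ 2 * r := by linarith
    exact le_trans this (le_max_left _ _)
  · intro z hz
    simp only [max_lt_iff] at hz
    obtain ⟨hz2r, hz1⟩ := hz
    set R : ℝ := ‖z‖ / 2 with hR
    have hRpos : 0 < R := by
      have := norm_nonneg z
      positivity
    have hball : Metric.closedBall z R ⊆ {w : ℂ | r < ‖w‖} := by
      intro w hw
      simp only [Metric.mem_closedBall, dist_eq_norm] at hw
      simp only [Set.mem_setOf_eq]
      have h := norm_sub_norm_le z w
      rw [show z - w = -(w - z) by ring, norm_neg] at h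
      have e1 : ‖z‖ = ‖z‖ := rfl
      have e2 : ‖w‖ = ‖w‖ := rfl
      have e3 : ‖w - z‖ = ‖w - z‖ := rfl
      rw [e1, e2] at h
      have hwz : ‖w - z‖ ≤ R := hw
      rw [hR] at hwz
      linarith
    have hdiff : DiffContOnCl ℂ f (Metric.ball z R) := by
      apply DifferentiableOn.diffContOnCl
      apply DifferentiableOn.mono (han.differentiableOn)
      exact le_trans Metric.closure_ball_subset_closedBall hball
    have hsp : ∀ w ∈ Metric.sphere z R, ‖f w‖ ≤ max C 0 * (3 / 2) ^ n * ‖z‖ ^ n := by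
      intro w hw
      simp only [Metric.mem_sphere, dist_eq_norm] at hw
      have hwmem : r < ‖w‖ :=
        hball (by simp [Metric.mem_closedBall, dist_eq_norm, hw])
      have hwle : ‖w‖ ≤ 3 / 2 * ‖z‖ := by
        have h1 : ‖w‖ ≤ ‖w - z‖ + ‖z‖ := by
          have := norm_add_le (w - z) z
          simpa using this
        rw [show ‖w - z‖ = ‖w - z‖ from rfl, hw, hR] at h1
        linarith
      calc ‖f w‖ = ‖f w‖ := rfl
        _ ≤ C * ‖w‖ ^ n := hb w hwmem
        _ ≤ max C 0 * ‖w‖ ^ n :=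
            mul_le_mul_of_nonneg_right (le_max_left _ _) (by positivity)
        _ ≤ max C 0 * (3 / 2 * ‖z‖) ^ n := by
            apply mul_le_mul_of_nonneg_left _ (le_max_right _ _)
            exact pow_le_pow_left₀ (norm_nonneg _) hwle n
        _ = max C 0 * (3 / 2) ^ n * ‖z‖ ^ n := by rw [mul_pow]; ring
    have := Complex.norm_deriv_le_of_forall_mem_sphere_norm_le hRpos hdiff hsp
    calc ‖deriv f z‖ = ‖deriv f z‖ := rfl
      _ ≤ max C 0 * (3 / 2) ^ n * ‖z‖ ^ n / R := this
      _ = 2 * max C 0 * (3 / 2) ^ n * ‖z‖ ^ n / ‖z‖ := by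
          rw [hR]; field_simp
      _ ≤ 2 * max C 0 * (3 / 2) ^ n * ‖z‖ ^ n := by
          apply div_le_self (by positivity) (le_of_lt hz1)

lemma rai_sum {s : Finset ℕ} {f : ℕ → ℂ → ℂ} (hf : ∀ i ∈ s, RationalAtInfinity (f i)) :
    RationalAtInfinity (fun z => ∑ i ∈ s, f i z) := by
  classical
  induction s using Finset.induction with
  | empty => simpa using rai_const 0
  | insert i s hns ih =>
    simp only [Finset.sum_insert hns]
    exact rai_add (hf i (Finset.mem_insert_self i s))
      (ih fun j hj => hf j (Finset.mem_insert_of_mem hj))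

lemma rai_cf (hd₀ : RationalAtInfinity d₀) (hd₁ : RationalAtInfinity d₁)
    (hν₀ : RationalAtInfinity ν₀) (hν₁ : RationalAtInfinity ν₁) :
    ∀ m j, RationalAtInfinity (cf d₀ d₁ ν₀ ν₁ m j) := by
  intro m
  induction m with
  | zero =>
    intro j
    match j with
    | 0 => exact rai_const 1
    | j + 1 => exact rai_const 0

  | succ m ih =>
    intro j
    match j with
    | 0 =>
      simp only [cf]
      exact rai_sub (rai_sub (rai_add (rai_add (rai_deriv (ih 0)) (rai_mul hd₁ (ih 0)))
        (rai_const 0)) (rai_mul (rai_mul (rai_const _) hν₁) (ih 0)))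
        (rai_mul (rai_mul (rai_const _) hν₀) (ih 1))
    | i + 1 =>
      simp only [cf]
      exact rai_sub (rai_sub (rai_add (rai_add (rai_deriv (ih (i + 1)))
        (rai_mul hd₁ (ih (i + 1)))) (rai_mul (rai_sub hd₀ (rai_const _)) (ih i)))
        (rai_mul (rai_mul (rai_const _) hν₁) (ih (i + 1))))
        (rai_mul (rai_mul (rai_const _) hν₀) (ih (i + 2)))

lemma cf_analytic {U : Set ℂ} (hd₀ : AnalyticOnNhd ℂ d₀ U) (hd₁ : AnalyticOnNhd ℂ d₁ U)
    (hν₀ : AnalyticOnNhd ℂ ν₀ U) (hν₁ : AnalyticOnNhd ℂ ν₁ U) :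
    ∀ m j, AnalyticOnNhd ℂ (cf d₀ d₁ ν₀ ν₁ m j) U := by
  intro m
  induction m with
  | zero =>
    intro j
    match j with
    | 0 => exact fun z _ => analyticAt_const
    | j + 1 => exact fun z _ => analyticAt_const
  | succ m ih =>
    intro j z hz
    match j with
    | 0 =>
      simp only [cf]
      exact ((((((ih 0).deriv z hz).add ((hd₁ z hz).mul (ih 0 z hz))).add
        analyticAt_const).sub ((analyticAt_const.mul (hν₁ z hz)).mul (ih 0 z hz))).sub
        ((analyticAt_const.mul (hν₀ z hz)).mul (ih 1 z hz)))
    | i + 1 =>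
      simp only [cf]
      exact ((((((ih (i + 1)).deriv z hz).add ((hd₁ z hz).mul (ih (i + 1) z hz))).add
        (((hd₀ z hz).sub analyticAt_const).mul (ih i z hz))).sub
        ((analyticAt_const.mul (hν₁ z hz)).mul (ih (i + 1) z hz))).sub
        ((analyticAt_const.mul (hν₀ z hz)).mul (ih (i + 2) z hz)))

/-- The core algebraic identity with explicit boundary terms. -/
lemma core' (w D₀ D₁ N₀ N₁ : ℂ) (A DA B : ℕ → ℂ)
    (hB0 : B 0 = DA 0 + D₁ * A 0 - N₀ * A 1)
    (hBs : ∀ i : ℕ, B (i + 1) = DA (i + 1) + D₁ * A (i + 1) + (D₀ - (i : ℂ)) * A i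
      - ((i : ℂ) + 1) * N₁ * A (i + 1) - ((i : ℂ) + 2) * N₀ * A (i + 2)) :
    ∀ n : ℕ,
    (∑ j ∈ Finset.range (n + 1),
        (DA j * w ^ j + A j * ((j : ℂ) * w ^ (j - 1) * (-(w ^ 2) - N₁ * w - N₀))))
      + (∑ j ∈ Finset.range (n + 1), A j * w ^ j) * (D₀ * w + D₁)
    = (∑ j ∈ Finset.range (n + 1), B j * w ^ j)
      + (D₀ - (n : ℂ)) * A n * w ^ (n + 1) + ((n : ℂ) + 1) * N₀ * A (n + 1) * w ^ n := by
  intro n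
  induction n with
  | zero =>
    rw [Finset.sum_range_one, Finset.sum_range_one, Finset.sum_range_one, hB0]
    push_cast
    ring
  | succ n ih =>
    rw [Finset.sum_range_succ
        (fun j => DA j * w ^ j + A j * ((j : ℂ) * w ^ (j - 1) * (-(w ^ 2) - N₁ * w - N₀)))
        (n + 1),
      Finset.sum_range_succ (fun j => A j * w ^ j) (n + 1),
      Finset.sum_range_succ (fun j => B j * w ^ j) (n + 1), hBs n]
    rw [Nat.add_sub_cancel]
    push_cast
    linear_combination ih

end LinOpAux

open LinOpAux in
/-- first part of Lemma 3.3: if `p'/p = d₀ q'/q + d₁` and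
`q'' + ν₁ q' + ν₀ q = 0`, with all coefficients rational at infinity, then
`L[p]/p = Σ_{j=0}^k b_j (q'/q)^j` with the `b_j` rational at infinity and
`b_k = d₀(d₀−1)⋯(d₀−k+1)`. -/
theorem linear_operator_on_logderiv_related_pair
    (k : ℕ) (hk : 1 ≤ k) (a : ℕ → ℂ → ℂ) (d₀ d₁ ν₀ ν₁ : ℂ → ℂ)
    (ha : ∀ j, j < k → RationalAtInfinity (a j))
    (hd₀ : RationalAtInfinity d₀) (hd₁ : RationalAtInfinity d₁)
    (hν₀ : RationalAtInfinity ν₀) (hν₁ : RationalAtInfinity ν₁) :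
    ∃ b : ℕ → ℂ → ℂ, (∀ j, j ≤ k → RationalAtInfinity (b j)) ∧
      (∃ r' : ℝ, 0 < r' ∧ ∀ z : ℂ, r' < ‖z‖ →
        b k z = ∏ j ∈ Finset.range k, (d₀ z - (j : ℂ))) ∧
      ∀ (r : ℝ) (U : Set ℂ), 0 < r → IsOpen U → IsConnected U →
        U ⊆ {z : ℂ | r < ‖z‖} →
        (∀ j, j < k → AnalyticOnNhd ℂ (a j) U) →
        AnalyticOnNhd ℂ d₀ U → AnalyticOnNhd ℂ d₁ U →
        AnalyticOnNhd ℂ ν₀ U → AnalyticOnNhd ℂ ν₁ U →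
        (∀ j, j ≤ k → AnalyticOnNhd ℂ (b j) U) →
        ∀ p q : ℂ → ℂ, AnalyticOnNhd ℂ p U → AnalyticOnNhd ℂ q U →
        (∀ z ∈ U, p z ≠ 0) → (∀ z ∈ U, q z ≠ 0) →
        (∀ z ∈ U, deriv p z / p z = d₀ z * (deriv q z / q z) + d₁ z) →
        (∀ z ∈ U, iteratedDeriv 2 q z + ν₁ z * deriv q z + ν₀ z * q z = 0) →
        ∀ z ∈ U,
          (iteratedDeriv k p z + ∑ j ∈ Finset.range k, a j z * iteratedDeriv j p z) / p z
            = ∑ j ∈ Finset.range (k + 1), b j z * (deriv q z / q z) ^ j := by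
  refine ⟨fun j z => cf d₀ d₁ ν₀ ν₁ k j z + ∑ m ∈ Finset.range k, a m z * cf d₀ d₁ ν₀ ν₁ m j z,
    ?_, ?_, ?_⟩
  · -- rationality at infinity
    intro j _
    exact rai_add (rai_cf hd₀ hd₁ hν₀ hν₁ k j)
      (rai_sum fun m hm => rai_mul (ha m (Finset.mem_range.mp hm)) (rai_cf hd₀ hd₁ hν₀ hν₁ m j))
  · -- the top coefficient
    refine ⟨1, one_pos, fun z _ => ?_⟩
    have hz : ∀ m ∈ Finset.range k, a m z * cf d₀ d₁ ν₀ ν₁ m k z = 0 := by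
      intro m hm
      rw [cf_zero_of_lt m k (Finset.mem_range.mp hm)]
      simp
    have key : cf d₀ d₁ ν₀ ν₁ k k z + ∑ m ∈ Finset.range k, a m z * cf d₀ d₁ ν₀ ν₁ m k z
        = ∏ j ∈ Finset.range k, (d₀ z - (j : ℂ)) := by
      rw [Finset.sum_eq_zero hz, add_zero, cf_diag]
    exact key
  · -- the main identity
    intro r U hr hUopen _hUconn hUsub haU hd₀U hd₁U hν₀U hν₁U _hbU p q hp hq hp0 hq0 hrel hODE
      z hzU
    set w : ℂ → ℂ := fun z => deriv q z / q z with hw_def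
    -- The main induction: p^{(m)} = (∑_j cf m j (q'/q)^j) p on U.
    have main : ∀ m : ℕ, ∀ z ∈ U, iteratedDeriv m p z
        = (∑ j ∈ Finset.range (m + 1), cf d₀ d₁ ν₀ ν₁ m j z * w z ^ j) * p z := by
      intro m
      induction m with
      | zero =>
        intro z hz
        simp [cf, iteratedDeriv_zero]
      | succ m ih =>
        intro z hz
        have hUz : U ∈ nhds z := hUopen.mem_nhds hz
        -- derivative of the previous level
        have heq : iteratedDeriv m p =ᶠ[nhds z]
            fun z => (∑ j ∈ Finset.range (m + 1), cf d₀ d₁ ν₀ ν₁ m j z * w z ^ j) * p z :=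
          Filter.eventuallyEq_of_mem hUz ih
        rw [iteratedDeriv_succ, heq.deriv_eq]
        -- analytic facts at z
        have hqz : AnalyticAt ℂ q z := hq z hz
        have hq0z : q z ≠ 0 := hq0 z hz
        have hp0z : p z ≠ 0 := hp0 z hz
        have hdq : AnalyticAt ℂ (deriv q) z := hq.deriv z hz
        -- derivative of w
        have hODEz : iteratedDeriv 2 q z = -(ν₁ z * deriv q z) - ν₀ z * q z := by
          have := hODE z hz
          linear_combination this
        have hdd : deriv (deriv q) z = iteratedDeriv 2 q z := by
          rw [iteratedDeriv_succ, iteratedDeriv_one]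
        have hwz : HasDerivAt w (-(w z ^ 2) - ν₁ z * w z - ν₀ z) z := by
          have h1 : HasDerivAt (fun z => deriv q z / q z)
              ((deriv (deriv q) z * q z - deriv q z * deriv q z) / q z ^ 2) z :=
            (hdq.differentiableAt.hasDerivAt).div (hqz.differentiableAt.hasDerivAt) hq0z
          convert h1 using 1
          rw [hdd, hODEz]
          simp only [hw_def]
          field_simp
          ring
        -- derivative of p
        have hpz : HasDerivAt p ((d₀ z * w z + d₁ z) * p z) z := by
          have h1 : deriv p z = (d₀ z * w z + d₁ z) * p z := by
            have := hrel z hz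
            rw [div_eq_iff hp0z] at this
            exact this
          rw [← h1]
          exact ((hp z hz).differentiableAt).hasDerivAt
        -- derivative of each summand
        have hterm : ∀ j ∈ Finset.range (m + 1),
            HasDerivAt (fun z => cf d₀ d₁ ν₀ ν₁ m j z * w z ^ j)
              (deriv (cf d₀ d₁ ν₀ ν₁ m j) z * w z ^ j
                + cf d₀ d₁ ν₀ ν₁ m j z
                  * ((j : ℂ) * w z ^ (j - 1) * (-(w z ^ 2) - ν₁ z * w z - ν₀ z))) z := by
          intro j _
          have hcj : AnalyticAt ℂ (cf d₀ d₁ ν₀ ν₁ m j) z :=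
            cf_analytic hd₀U hd₁U hν₀U hν₁U m j z hz
          exact (hcj.differentiableAt.hasDerivAt).mul (hwz.pow j)
        have hS : HasDerivAt (fun z => ∑ j ∈ Finset.range (m + 1), cf d₀ d₁ ν₀ ν₁ m j z * w z ^ j)
            (∑ j ∈ Finset.range (m + 1),
              (deriv (cf d₀ d₁ ν₀ ν₁ m j) z * w z ^ j
                + cf d₀ d₁ ν₀ ν₁ m j z
                  * ((j : ℂ) * w z ^ (j - 1) * (-(w z ^ 2) - ν₁ z * w z - ν₀ z)))) z :=
          HasDerivAt.fun_sum hterm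
        have hG : HasDerivAt
            (fun z => (∑ j ∈ Finset.range (m + 1), cf d₀ d₁ ν₀ ν₁ m j z * w z ^ j) * p z)
            ((∑ j ∈ Finset.range (m + 1),
              (deriv (cf d₀ d₁ ν₀ ν₁ m j) z * w z ^ j
                + cf d₀ d₁ ν₀ ν₁ m j z
                  * ((j : ℂ) * w z ^ (j - 1) * (-(w z ^ 2) - ν₁ z * w z - ν₀ z))))
              * p z
              + (∑ j ∈ Finset.range (m + 1), cf d₀ d₁ ν₀ ν₁ m j z * w z ^ j)
                * ((d₀ z * w z + d₁ z) * p z)) z := hS.mul hpz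
        rw [hG.deriv]
        -- now the algebraic identity
        set A : ℕ → ℂ := fun j => cf d₀ d₁ ν₀ ν₁ m j z with hA_def
        set DA : ℕ → ℂ := fun j => deriv (cf d₀ d₁ ν₀ ν₁ m j) z with hDA_def
        set B : ℕ → ℂ := fun j => cf d₀ d₁ ν₀ ν₁ (m + 1) j z with hB_def
        have hAtop : A (m + 1) = 0 := by
          simp only [hA_def, cf_zero_of_lt m (m + 1) (Nat.lt_succ_self m)]
        have hAtop2 : A (m + 2) = 0 := by
          simp only [hA_def, cf_zero_of_lt m (m + 2) (by omega)]
        have hDAtop : DA (m + 1) = 0 := by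
          simp only [hDA_def, cf_zero_of_lt m (m + 1) (Nat.lt_succ_self m), deriv_const']
        have hB0 : B 0 = DA 0 + d₁ z * A 0 - ν₀ z * A 1 := by
          simp only [hB_def, hA_def, hDA_def, cf]
          push_cast
          ring
        have hBs : ∀ i : ℕ, B (i + 1) = DA (i + 1) + d₁ z * A (i + 1) + (d₀ z - (i : ℂ)) * A i
            - ((i : ℂ) + 1) * ν₁ z * A (i + 1) - ((i : ℂ) + 2) * ν₀ z * A (i + 2) := by
          intro i
          simp only [hB_def, hA_def, hDA_def, cf]
          push_cast
          ring
        have hcore := core' (w z) (d₀ z) (d₁ z) (ν₀ z) (ν₁ z) A DA B hB0 hBs (m + 1)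
        rw [hAtop, hAtop2] at hcore
        simp only [mul_zero, zero_mul, add_zero] at hcore
        -- extend the range-(m+1) sums to range-(m+2)
        have hext1 : ∑ j ∈ Finset.range (m + 2),
            (DA j * w z ^ j + A j * ((j : ℂ) * w z ^ (j - 1)
              * (-(w z ^ 2) - ν₁ z * w z - ν₀ z)))
            = ∑ j ∈ Finset.range (m + 1),
            (DA j * w z ^ j + A j * ((j : ℂ) * w z ^ (j - 1)
              * (-(w z ^ 2) - ν₁ z * w z - ν₀ z))) := by
          rw [Finset.sum_range_succ, hAtop, hDAtop]
          simp
        have hext2 : ∑ j ∈ Finset.range (m + 2), A j * w z ^ j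
            = ∑ j ∈ Finset.range (m + 1), A j * w z ^ j := by
          rw [Finset.sum_range_succ, hAtop]
          simp
        rw [hext1, hext2] at hcore
        calc (∑ j ∈ Finset.range (m + 1),
              (DA j * w z ^ j + A j * ((j : ℂ) * w z ^ (j - 1)
                * (-(w z ^ 2) - ν₁ z * w z - ν₀ z)))) * p z
              + (∑ j ∈ Finset.range (m + 1), A j * w z ^ j) * ((d₀ z * w z + d₁ z) * p z)
            = ((∑ j ∈ Finset.range (m + 1),
              (DA j * w z ^ j + A j * ((j : ℂ) * w z ^ (j - 1)
                * (-(w z ^ 2) - ν₁ z * w z - ν₀ z))))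
              + (∑ j ∈ Finset.range (m + 1), A j * w z ^ j) * (d₀ z * w z + d₁ z)) * p z := by
              ring
          _ = (∑ j ∈ Finset.range (m + 2), B j * w z ^ j) * p z := by rw [hcore]
    -- assemble the final statement
    have hnum : iteratedDeriv k p z + ∑ j ∈ Finset.range k, a j z * iteratedDeriv j p z
        = (∑ j ∈ Finset.range (k + 1),
            (cf d₀ d₁ ν₀ ν₁ k j z + ∑ m ∈ Finset.range k, a m z * cf d₀ d₁ ν₀ ν₁ m j z)
              * w z ^ j) * p z := by
      have hk' : ∀ m, m < k → ∑ j ∈ Finset.range (m + 1), cf d₀ d₁ ν₀ ν₁ m j z * w z ^ j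
          = ∑ j ∈ Finset.range (k + 1), cf d₀ d₁ ν₀ ν₁ m j z * w z ^ j := by
        intro m hm
        apply Finset.sum_subset
        · intro x hx
          simp only [Finset.mem_range] at hx ⊢
          omega
        · intro x _ hx
          simp only [Finset.mem_range, not_lt] at hx
          rw [cf_zero_of_lt m x (by omega)]
          simp
      rw [main k z hzU]
      have hterms : ∀ m ∈ Finset.range k, a m z * iteratedDeriv m p z
          = a m z * ((∑ j ∈ Finset.range (k + 1), cf d₀ d₁ ν₀ ν₁ m j z * w z ^ j) * p z) := by
        intro m hm
        rw [main m z hzU, hk' m (Finset.mem_range.mp hm)]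
      rw [Finset.sum_congr rfl hterms]
      rw [Finset.sum_congr rfl (fun j _ => add_mul (cf d₀ d₁ ν₀ ν₁ k j z)
        (∑ m ∈ Finset.range k, a m z * cf d₀ d₁ ν₀ ν₁ m j z) (w z ^ j)),
        Finset.sum_add_distrib, add_mul]
      congr 1
      calc ∑ m ∈ Finset.range k,
            a m z * ((∑ j ∈ Finset.range (k + 1), cf d₀ d₁ ν₀ ν₁ m j z * w z ^ j) * p z)
          = ∑ m ∈ Finset.range k, ∑ j ∈ Finset.range (k + 1),
              a m z * cf d₀ d₁ ν₀ ν₁ m j z * w z ^ j * p z := by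
            refine Finset.sum_congr rfl fun m _ => ?_
            rw [Finset.sum_mul, Finset.mul_sum]
            exact Finset.sum_congr rfl fun j _ => by ring
        _ = ∑ j ∈ Finset.range (k + 1), ∑ m ∈ Finset.range k,
              a m z * cf d₀ d₁ ν₀ ν₁ m j z * w z ^ j * p z := Finset.sum_comm
        _ = (∑ j ∈ Finset.range (k + 1),
              (∑ m ∈ Finset.range k, a m z * cf d₀ d₁ ν₀ ν₁ m j z) * w z ^ j) * p z := by
            simp only [Finset.sum_mul]
    rw [hnum, mul_div_assoc, div_self (hp0 z hzU), mul_one]
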